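/- Let S be a Hermitian complex matrix and σ a positive definite complex matrix, both indexed by the same nonempty finite type. Then ‖S‖₁ ≤ √( tr(σ) · tr((σ^{−1/4} · S · σ^{−1/4})²) ), where ‖S‖₁ is the trace norm (the sum of the absolute values of the eigenvalues of S), σ^{−1/4} is the inverse of the unique PSD fourth root of σ, and tr((σ^{−1/4} S σ^{−1/4})²) is real and nonnegative (it equals tr(S σ^{−1/2} S σ^{−1/2}) for σ^{−1/2} the inverse PSD square root). -/

import Mathlib

open Matrix
open scoped Classical ComplexOrder ComplexConjugate

-- Cauchy–Schwarz for complex sums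
private lemma sum_cs {m : Type*} [Fintype m] (f g : m → ℂ) :
    ‖∑ i, conj (f i) * g i‖ ≤
      Real.sqrt (∑ i, ‖f i‖ ^ 2) * Real.sqrt (∑ i, ‖g i‖ ^ 2) := by
  have h := norm_inner_le_norm (𝕜 := ℂ)
      ((WithLp.equiv 2 (m → ℂ)).symm f) ((WithLp.equiv 2 (m → ℂ)).symm g)
  rw [PiLp.inner_apply, EuclideanSpace.norm_eq, EuclideanSpace.norm_eq] at h
  simpa [RCLike.inner_apply, Real.sqrt_eq_rpow, mul_comm] using h

private lemma trace_key {n : Type*} [Fintype n] (C D : Matrix n n ℂ) :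
    (Cᴴ * D).trace = ∑ p : n × n, conj (C p.1 p.2) * D p.1 p.2 := by
  rw [Matrix.trace, Fintype.sum_prod_type]
  simp only [Matrix.diag, Matrix.mul_apply, Matrix.conjTranspose_apply]
  exact Finset.sum_comm

private lemma trace_self_re {n : Type*} [Fintype n] (A : Matrix n n ℂ) :
    (Aᴴ * A).trace.re = ∑ p : n × n, ‖A p.1 p.2‖ ^ 2 := by
  rw [trace_key, Complex.re_sum]
  refine Finset.sum_congr rfl fun p _ => ?_
  rw [Complex.conj_mul']
  norm_cast

private lemma trace_self_re_nonneg {n : Type*} [Fintype n] (A : Matrix n n ℂ) :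
    0 ≤ (Aᴴ * A).trace.re := by
  rw [trace_self_re]; positivity

private lemma trace_cs {n : Type*} [Fintype n] (A B : Matrix n n ℂ) :
    ‖(Aᴴ * B).trace‖ ≤
      Real.sqrt ((Aᴴ * A).trace.re) * Real.sqrt ((Bᴴ * B).trace.re) := by
  rw [trace_key, trace_self_re, trace_self_re]
  exact sum_cs (fun p : n × n => A p.1 p.2) (fun p => B p.1 p.2)

theorem traceNorm_le_sqrt_weighted_l2'
    {n : Type*} [Fintype n] [DecidableEq n] [Nonempty n]
    (S σ : Matrix n n ℂ) (hS : S.IsHermitian) (hσ : σ.PosDef)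
    (σ4 : Matrix n n ℂ) (hσ4 : σ4.PosSemidef) (hroot : σ4 ^ 4 = σ) :
    (if h : S.IsHermitian then ∑ i, |h.eigenvalues i| else 0)
      ≤ Real.sqrt (σ.trace.re * (((σ4⁻¹ * S * σ4⁻¹) ^ 2).trace).re) := by
  -- invertibility of σ4
  have hdet : IsUnit σ4.det := by
    have h4 : σ4.det ^ 4 = σ.det := by rw [← Matrix.det_pow, hroot]
    have hne : σ4.det ≠ 0 := by
      intro h
      rw [h, zero_pow (by norm_num)] at h4
      exact hσ.det_pos.ne' h4.symm
    exact hne.isUnit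
  have hinv1 : σ4 * σ4⁻¹ = 1 := Matrix.mul_nonsing_inv _ hdet
  have hinv2 : σ4⁻¹ * σ4 = 1 := Matrix.nonsing_inv_mul _ hdet
  have hσ4H : σ4ᴴ = σ4 := hσ4.1
  have hσ4iH : (σ4⁻¹)ᴴ = σ4⁻¹ := by rw [Matrix.conjTranspose_nonsing_inv, hσ4H]
  set T : Matrix n n ℂ := σ4⁻¹ * S * σ4⁻¹ with hT
  have hTH : Tᴴ = T := by
    rw [hT, Matrix.conjTranspose_mul, Matrix.conjTranspose_mul, hσ4iH, hS.eq,
      ← Matrix.mul_assoc]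
  have hST : S = σ4 * T * σ4 := by
    rw [hT]
    simp only [← Matrix.mul_assoc]
    rw [hinv1, Matrix.one_mul, Matrix.mul_assoc, hinv2, Matrix.mul_one]
  -- spectral setup
  set V : Matrix n n ℂ := (hS.eigenvectorUnitary : Matrix n n ℂ) with hVdef
  set lam := hS.eigenvalues with hlam
  have hV1 : V * Vᴴ = 1 := by
    have := (Matrix.mem_unitaryGroup_iff).mp hS.eigenvectorUnitary.2
    simpa [Matrix.star_eq_conjTranspose] using this
  have hV2 : Vᴴ * V = 1 := by
    have := (Matrix.mem_unitaryGroup_iff').mp hS.eigenvectorUnitary.2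
    simpa [Matrix.star_eq_conjTranspose] using this
  set ε : n → ℂ := fun i => if 0 ≤ lam i then 1 else -1 with hε
  have key : ∀ D D' : Matrix n n ℂ, (V * D * Vᴴ) * (V * D' * Vᴴ) = V * (D * D') * Vᴴ := by
    intro D D'
    simp only [Matrix.mul_assoc]
    rw [← Matrix.mul_assoc Vᴴ V, hV2, Matrix.one_mul]
  set U : Matrix n n ℂ := V * Matrix.diagonal ε * Vᴴ with hU
  have hεstar : star ε = ε := by
    funext i
    simp only [Pi.star_apply, hε]
    split_ifs <;> simp
  have hUH : Uᴴ = U := by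
    rw [hU]
    simp only [Matrix.conjTranspose_mul, Matrix.conjTranspose_conjTranspose,
      Matrix.diagonal_conjTranspose, hεstar, Matrix.mul_assoc]
  have hεε : Matrix.diagonal ε * Matrix.diagonal ε = 1 := by
    rw [Matrix.diagonal_mul_diagonal]
    have : (fun i => ε i * ε i) = fun _ => (1 : ℂ) := by
      funext i
      simp only [hε]
      split_ifs <;> ring
    rw [this]
    exact Matrix.diagonal_one
  have hUU : U * Uᴴ = 1 := by
    rw [hUH, hU, key, hεε, Matrix.mul_one, hV1]
  -- trace (S * U)
  have htrSU : (S * U).trace = ((∑ i, |lam i| : ℝ) : ℂ) := by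
    conv_lhs => rw [hS.spectral_theorem]
    rw [Unitary.conjStarAlgAut_apply, Matrix.star_eq_conjTranspose, ← hVdef, ← hlam, hU, key,
      Matrix.trace_mul_cycle, ← Matrix.mul_assoc, hV2, Matrix.one_mul,
      Matrix.diagonal_mul_diagonal, Matrix.trace_diagonal]
    rw [Complex.ofReal_sum]
    refine Finset.sum_congr rfl fun i _ => ?_
    by_cases h : 0 ≤ lam i
    · simp [hε, h, abs_of_nonneg h, Function.comp]
    · simp only [Function.comp_apply, hε, if_neg h, abs_of_neg (lt_of_not_ge h)]
      push_cast
      try ring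
      try rfl
  -- step 1: traceNorm ≤ ‖trace (Tᴴ * M)‖
  set M : Matrix n n ℂ := σ4 * U * σ4 with hM
  have h2 : (S * U).trace = (Tᴴ * M).trace := by
    rw [hTH]
    conv_lhs => rw [hST]
    rw [Matrix.trace_mul_cycle (σ4 * T) σ4 U, Matrix.trace_mul_cycle U (σ4 * T) σ4,
      hM, ← Matrix.mul_assoc, Matrix.trace_mul_comm]
  have h3 : (if h : S.IsHermitian then ∑ i, |h.eigenvalues i| else 0) ≤ ‖(Tᴴ * M).trace‖ := by
    rw [dif_pos hS, ← hlam, ← h2, htrSU]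
    rw [← Complex.ofReal_re ((∑ i, |lam i| : ℝ))]
    exact Complex.re_le_norm _
  -- the P = σ4 * σ4 bookkeeping
  set P : Matrix n n ℂ := σ4 * σ4 with hP
  have hPH : Pᴴ = P := by rw [hP, Matrix.conjTranspose_mul, hσ4H]
  have hPP : P * P = σ := by
    rw [hP, ← hroot, show (4 : ℕ) = 2 + 2 from rfl, pow_add, pow_two]
  have hXH : (Uᴴ * P * U)ᴴ = Uᴴ * P * U := by
    simp only [Matrix.conjTranspose_mul, Matrix.conjTranspose_conjTranspose, hPH,
      Matrix.mul_assoc]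
  have hσre : 0 ≤ σ.trace.re := by
    have := trace_self_re_nonneg P
    rwa [hPH, hPP] at this
  have hMMre : (Mᴴ * M).trace.re ≤ σ.trace.re := by
    have e1 : Mᴴ * M = σ4 * (Uᴴ * P * U * σ4) := by
      rw [hM, hP]
      simp only [Matrix.conjTranspose_mul, hσ4H, Matrix.mul_assoc]
    have e2 : (Uᴴ * P * U * σ4) * σ4 = (Uᴴ * P * U) * P := by
      rw [hP]; simp only [Matrix.mul_assoc]
    have htrM : (Mᴴ * M).trace = ((Uᴴ * P * U)ᴴ * P).trace := by
      rw [e1, Matrix.trace_mul_comm, e2, hXH]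
    have hYY : ((Uᴴ * P * U)ᴴ * (Uᴴ * P * U)).trace = σ.trace := by
      have e3 : (Uᴴ * P * U)ᴴ * (Uᴴ * P * U) = Uᴴ * (P * P) * U := by
        rw [hXH]
        simp only [Matrix.mul_assoc]
        rw [← Matrix.mul_assoc U Uᴴ, hUU, Matrix.one_mul]
      rw [e3, Matrix.trace_mul_cycle, hUU, Matrix.one_mul, hPP]
    have h5 := trace_cs (Uᴴ * P * U) P
    rw [hYY] at h5
    have hPPtr : (Pᴴ * P).trace = σ.trace := by rw [hPH, hPP]
    rw [hPPtr, Real.mul_self_sqrt hσre] at h5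
    calc (Mᴴ * M).trace.re = (((Uᴴ * P * U)ᴴ * P).trace).re := by rw [htrM]
      _ ≤ ‖((Uᴴ * P * U)ᴴ * P).trace‖ := by
          exact Complex.re_le_norm _
      _ ≤ σ.trace.re := h5
  -- finish
  have hTT : (Tᴴ * T).trace = ((σ4⁻¹ * S * σ4⁻¹) ^ 2).trace := by
    rw [hTH, pow_two]
  calc (if h : S.IsHermitian then ∑ i, |h.eigenvalues i| else 0)
      ≤ ‖(Tᴴ * M).trace‖ := h3
    _ ≤ Real.sqrt ((Tᴴ * T).trace.re) * Real.sqrt ((Mᴴ * M).trace.re) := trace_cs T M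
    _ ≤ Real.sqrt ((Tᴴ * T).trace.re) * Real.sqrt (σ.trace.re) := by
        exact mul_le_mul_of_nonneg_left (Real.sqrt_le_sqrt hMMre) (Real.sqrt_nonneg _)
    _ = Real.sqrt (σ.trace.re * (((σ4⁻¹ * S * σ4⁻¹) ^ 2).trace).re) := by
        rw [Real.sqrt_mul hσre, hTT, mul_comm]

/-- Trace norm of a Hermitian complex matrix: the sum of the absolute values of
its eigenvalues. -/
noncomputable def traceNorm {n : Type*} [Fintype n] [DecidableEq n] (M : Matrix n n ℂ) : ℝ :=
  if h : M.IsHermitian then ∑ i, |h.eigenvalues i| else 0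

/-- For a Hermitian matrix `S` and a positive definite `σ` (with PSD fourth root `σ4`),
`‖S‖₁ ≤ √(tr(σ)·tr((σ^{−1/4} S σ^{−1/4})²))`. -/
theorem traceNorm_le_sqrt_weighted_l2
    {n : Type*} [Fintype n] [DecidableEq n] [Nonempty n]
    (S σ : Matrix n n ℂ) (hS : S.IsHermitian) (hσ : σ.PosDef)
    (σ4 : Matrix n n ℂ) (hσ4 : σ4.PosSemidef) (hroot : σ4 ^ 4 = σ) :
    traceNorm S
      ≤ Real.sqrt (σ.trace.re * (((σ4⁻¹ * S * σ4⁻¹) ^ 2).trace).re) := by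
  rw [traceNorm]
  exact traceNorm_le_sqrt_weighted_l2' S σ hS hσ σ4 hσ4 hroot
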